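/- Let P = (p(i,j))_{i,j≥0} be the cookie environment matrix of a cookie environment C = (p_1,…,p_M; q), and let a ≤ a' be such that a ↔ a' (mutual accessibility: p^{(n)}(a,a') > 0 and p^{(m)}(a',a) > 0 for some n,m ≥ 1). Then the finite sub-matrix (p(i,j))_{a ≤ i,j ≤ a'} is irreducible: for all i,j ∈ [a,a'] there is a path i = n_0, n_1, …, n_m = j contained in [a,a'] with p(n_{t−1}, n_t) > 0 for all t. -/

import Mathlib

open MeasureTheory ProbabilityTheory Filter Topology
open scoped ENNReal NNReal

namespace CookieRW

/-- A cookie environment `𝒞 = (p 1, …, p M ; q)`.  Only the values `p 1, …, p M`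
of the strength function are relevant. -/
structure Env where
  M : ℕ
  hM : 1 ≤ M
  p : ℕ → ℝ
  hp : ∀ i, 1 ≤ i → i ≤ M → 0 ≤ p i ∧ p i < 1
  q : ℝ
  hq0 : 0 < q
  hq1 : q < 1

namespace Env

/-- strength of the excitation received on the `j`-th visit to a site
(`q` after the `M` cookies have been eaten). -/
def str (C : Env) (j : ℕ) : ℝ := if j ≤ C.M then C.p j else C.q

/-- canonical componentwise partial order on cookie environments -/
def le (C C' : Env) : Prop :=
  C.M = C'.M ∧ (∀ i, 1 ≤ i → i ≤ C.M → C.p i ≤ C'.p i) ∧ C.q ≤ C'.q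

end Env

/-- vertices of the rooted `b`-ary tree: the root is `[]` and the children of `x`
are the lists `i :: x`, `i : Fin b`. -/
abbrev Vertex (b : ℕ) := List (Fin b)

def root (b : ℕ) : Vertex b := []

/-- the father of a vertex (the father of the root is the root itself). -/
def father {b : ℕ} (x : Vertex b) : Vertex b := x.tail

def child {b : ℕ} (x : Vertex b) (i : Fin b) : Vertex b := i :: x

/-- number of visits of the trajectory `h` to its position at time `n`,
up to and including time `n`. -/
def visits {b : ℕ} (h : ℕ → Vertex b) (n : ℕ) : ℕ :=
  ((Finset.range (n + 1)).filter fun k => h k = h n).card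

/-- `X` is a `C` cookie (multi-excited) random walk on the rooted `b`-ary tree,
under the probability measure `P`. -/
def IsCRW {Ω : Type*} [MeasurableSpace Ω] (b : ℕ) (C : Env)
    (P : Measure Ω) (X : ℕ → Ω → Vertex b) : Prop :=
  (∀ n x, MeasurableSet {ω | X n ω = x}) ∧
  P {ω | X 0 ω = root b} = 1 ∧
  ∀ (n : ℕ) (h : ℕ → Vertex b),
    P {ω | ∀ k ≤ n, X k ω = h k} ≠ 0 →
      (∀ i : Fin b,
        (P[|{ω | ∀ k ≤ n, X k ω = h k}]) {ω | X (n + 1) ω = child (h n) i}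
          = ENNReal.ofReal (C.str (visits h n) / b)) ∧
      (P[|{ω | ∀ k ≤ n, X k ω = h k}]) {ω | X (n + 1) ω = father (h n)}
          = ENNReal.ofReal (1 - C.str (visits h n))

/-- the walk visits every vertex infinitely often, almost surely. -/
def Recurrent {Ω : Type*} [MeasurableSpace Ω] {b : ℕ}
    (P : Measure Ω) (X : ℕ → Ω → Vertex b) : Prop :=
  ∀ x : Vertex b, P {ω | {n : ℕ | X n ω = x}.Infinite} = 1

/-- `|X_n| → ∞` almost surely. -/
def Transient {Ω : Type*} [MeasurableSpace Ω] {b : ℕ}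
    (P : Measure Ω) (X : ℕ → Ω → Vertex b) : Prop :=
  P {ω | Tendsto (fun n => (X n ω).length) atTop atTop} = 1

/-- successive return times of the walk to the root (`sInf ∅ = ⊤ = ∞`). -/
noncomputable def tau {Ω : Type*} {b : ℕ} (X : ℕ → Ω → Vertex b) : ℕ → Ω → ℕ∞
  | 0 => fun _ => 0
  | k + 1 => fun ω =>
      sInf {t : ℕ∞ | ∃ m : ℕ, t = (m : ℕ∞) ∧ tau X k ω < (m : ℕ∞) ∧ X m ω = root b}

/-- distribution of `ξ_i` : `xiProb b C i v = P(ξ_i = v)` for `v ∈ {0, …, b}`. -/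
noncomputable def xiProb (b : ℕ) (C : Env) (i v : ℕ) : ℝ :=
  if v = 0 then 1 - C.str i else if v ≤ b then C.str i / b else 0

/-- probability of a given realization `e` of `(ξ_1, …, ξ_N)`. -/
noncomputable def seqWeight (b : ℕ) (C : Env) {N : ℕ} (e : Fin N → Fin (b + 1)) : ℝ :=
  ∏ k, xiProb b C (k.1 + 1) (e k).1

/-- the cookie environment matrix `p(i,j)` : the probability that exactly `j` of the
`ξ`'s take the value `1` before the `i`-th failure in the sequence `(ξ_1, ξ_2, …)`,
obtained by decomposing over the time `N` of the `i`-th failure. -/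
noncomputable def pMat (b : ℕ) (C : Env) (i j : ℕ) : ℝ :=
  if i = 0 then (if j = 0 then 1 else 0)
  else
    ∑' N : ℕ,
      ∑ e ∈ Finset.univ.filter (fun e : Fin N → Fin (b + 1) =>
          (Finset.univ.filter fun k => (e k).1 = 0).card = i ∧
          (Finset.univ.filter fun k => (e k).1 = 1).card = j ∧
          ∀ k : Fin N, k.1 + 1 = N → (e k).1 = 0),
        seqWeight b C e

/-- entries `p^{(n)}(i,j)` of the `n`-th power of the matrix `P`. -/
noncomputable def pPow (b : ℕ) (C : Env) : ℕ → ℕ → ℕ → ℝ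
  | 0 => fun i j => if i = j then 1 else 0
  | n + 1 => fun i j => ∑' k : ℕ, pPow b C n i k * pMat b C k j

/-- accessibility `i → j` for the matrix `P`. -/
def acc (b : ℕ) (C : Env) (i j : ℕ) : Prop := ∃ n, 1 ≤ n ∧ 0 < pPow b C n i j

/-- mutual accessibility `i ↔ j`. -/
def macc (b : ℕ) (C : Env) (i j : ℕ) : Prop := acc b C i j ∧ acc b C j i

/-- the spectral radius `lim_n (p^{(n)}(i,i))^{1/n}` of the irreducible class of `i`
(a path from `i` to `i` stays inside the class of `i`). -/
noncomputable def classRadius (b : ℕ) (C : Env) (i : ℕ) : ℝ :=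
  limsup (fun n : ℕ => (pPow b C n i i) ^ ((n : ℝ)⁻¹)) atTop

/-- `λ(𝒞)` : the largest spectral radius of the irreducible classes of `P`
other than `{0}`. -/
noncomputable def lambdaC (b : ℕ) (C : Env) : ℝ :=
  sSup {x : ℝ | ∃ i, 1 ≤ i ∧ macc b C i i ∧ x = classRadius b C i}

/-- the quantity `λ_sym(𝒞)` of Theorem 1.5. -/
noncomputable def lambdaSym (b : ℕ) (C : Env) : ℝ :=
  (C.q / (b * (1 - C.q))) *
    ∏ i ∈ Finset.Icc 1 C.M,
      ((1 - C.p i) * (C.q / (b * (1 - C.q))) + (b - 1) * C.p i / b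
        + (C.p i / b) * (C.q / (b * (1 - C.q)))⁻¹)

/-- the left endpoint `l_K` of the unique infinite irreducible class of `P`
(the class of `M + 1`). -/
noncomputable def lK (b : ℕ) (C : Env) : ℕ := sInf {i | macc b C i (C.M + 1)}

/-- joint law of the positions of the `b` children of a particle located at `j0`:
`childLaw b C j0 j` is the probability that, among `ξ_1, …, ξ_{j0 + j 1 + … + j b}`,
exactly `j0` of them equal `0`, exactly `j k` of them equal `k` for `k ∈ {1, …, b}`,
and the last one equals `0`. -/
noncomputable def childLaw (b : ℕ) (C : Env) (j0 : ℕ) (j : Fin b → ℕ) : ℝ :=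
  if j0 = 0 then (if ∀ i, j i = 0 then 1 else 0)
  else
    ∑ e ∈ Finset.univ.filter (fun e : Fin (j0 + ∑ i, j i) → Fin (b + 1) =>
        (Finset.univ.filter fun k => (e k).1 = 0).card = j0 ∧
        (∀ i : Fin b, (Finset.univ.filter fun k => (e k).1 = i.1 + 1).card = j i) ∧
        ∀ k, k.1 + 1 = j0 + ∑ i, j i → (e k).1 = 0),
      seqWeight b C e

/-- `ℓ` is (a realization of) the branching Markov chain `L` associated with the
cookie environment `C`, started from one particle located at `k` (the measure `P_k`):
particles are indexed by the vertices of the tree, and, conditionally on the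
positions of the particles up to generation `n`, the children vectors of the
particles of generation `n` are independent with joint law `childLaw`. -/
def IsBMC {Ω : Type*} [MeasurableSpace Ω] (b : ℕ) (C : Env) (P : Measure Ω)
    (ℓ : Vertex b → Ω → ℕ) (k : ℕ) : Prop :=
  (∀ x m, MeasurableSet {ω | ℓ x ω = m}) ∧
  P {ω | ℓ (root b) ω = k} = 1 ∧
  ∀ (n : ℕ) (g f : Vertex b → ℕ),
    P {ω | ∀ y : Vertex b, y.length ≤ n → ℓ y ω = g y} ≠ 0 →
      (P[|{ω | ∀ y : Vertex b, y.length ≤ n → ℓ y ω = g y}])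
          {ω | ∀ x : Vertex b, x.length = n + 1 → ℓ x ω = f x}
        = ENNReal.ofReal
            (∏ v : Fin n → Fin b,
              childLaw b C (g (List.ofFn v)) fun i => f (i :: List.ofFn v))

/-- the branching Markov chain dies out : at some generation all particles are at `0`. -/
def DiesOut {Ω : Type*} {b : ℕ} (ℓ : Vertex b → Ω → ℕ) (ω : Ω) : Prop :=
  ∃ n : ℕ, ∀ x : Vertex b, x.length = n → ℓ x ω = 0

/-- `Z` is a Markov chain on `ℕ` with transition matrix the cookie environment
matrix `P`, started from `i0`. -/
def IsChainP {Ω : Type*} [MeasurableSpace Ω] (b : ℕ) (C : Env) (P : Measure Ω)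
    (Z : ℕ → Ω → ℕ) (i0 : ℕ) : Prop :=
  (∀ n m, MeasurableSet {ω | Z n ω = m}) ∧
  P {ω | Z 0 ω = i0} = 1 ∧
  ∀ (n : ℕ) (h : ℕ → ℕ),
    P {ω | ∀ k ≤ n, Z k ω = h k} ≠ 0 →
      ∀ j, (P[|{ω | ∀ k ≤ n, Z k ω = h k}]) {ω | Z (n + 1) ω = j}
        = ENNReal.ofReal (pMat b C (h n) j)

/-- the largest positive eigenvalue `ν(p₁,p₂)` of the matrix of Proposition 1.7. -/
noncomputable def nu (b : ℕ) (p1 p2 : ℝ) : ℝ :=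
  (1 / (2 * (b : ℝ) ^ 2)) *
    (((b : ℝ) - 1) * p1 * p2 + b * p1 +
      Real.sqrt (((b : ℝ) ^ 2 - 6 * b + 1) * p1 ^ 2 * p2 ^ 2
        + 2 * b * ((b : ℝ) - 1) * p1 ^ 2 * p2 + (b : ℝ) ^ 2 * p1 ^ 2
        + 4 * b * p1 * p2 ^ 2))

/-- `s = q / (q + (1-q) b)`. -/
noncomputable def sC (b : ℕ) (C : Env) : ℝ := C.q / (C.q + (1 - C.q) * b)

/-- probability of the event `E_{m,n}` : among `(ξ_1, …, ξ_M)` there are at least `m`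
terms equal to `0` and exactly `n` terms equal to `1` before the `m`-th `0`. -/
noncomputable def probE (b : ℕ) (C : Env) (m n : ℕ) : ℝ :=
  ∑ e ∈ Finset.univ.filter (fun e : Fin C.M → Fin (b + 1) =>
      ∃ t : Fin C.M, (e t).1 = 0 ∧
        (Finset.univ.filter fun k => k ≤ t ∧ (e k).1 = 0).card = m ∧
        (Finset.univ.filter fun k => k < t ∧ (e k).1 = 1).card = n),
    seqWeight b C e

/-- probability of the event `E'_{m,n}` : among `(ξ_1, …, ξ_M)` there are exactly `m`
terms equal to `0` and exactly `n` terms equal to `1`. -/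
noncomputable def probE' (b : ℕ) (C : Env) (m n : ℕ) : ℝ :=
  ∑ e ∈ Finset.univ.filter (fun e : Fin C.M → Fin (b + 1) =>
      (Finset.univ.filter fun k => (e k).1 = 0).card = m ∧
      (Finset.univ.filter fun k => (e k).1 = 1).card = n),
    seqWeight b C e

/-- the correction term `A(j)` of Lemma 7.3. -/
noncomputable def Afun (b : ℕ) (C : Env) (j : ℕ) : ℝ :=
  (∑ i ∈ Finset.Icc 1 (C.M - j), probE b C i j * (sC b C / (1 - sC b C)) ^ (i - 1))
    - ∑ n ∈ Finset.Icc (j + 1) C.M, ∑ m ∈ Finset.range (C.M - n + 1),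
        probE' b C m n * (sC b C / (1 - sC b C)) ^ ((j : ℤ) + m - n)

/-- entries of the `n`-th power of the sub-matrix `(p(i,j))_{i,j ≥ l}`. -/
noncomputable def pPowFrom (b : ℕ) (C : Env) (l : ℕ) : ℕ → ℕ → ℕ → ℝ
  | 0 => fun i j => if i = j then 1 else 0
  | n + 1 => fun i j => ∑' k : ℕ, pPowFrom b C l n i (l + k) * pMat b C (l + k) j

/-- entries of the `n`-th power of a general matrix indexed by `ℕ`. -/
noncomputable def matPow (q : ℕ → ℕ → ℝ) : ℕ → ℕ → ℕ → ℝ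
  | 0 => fun i j => if i = j then 1 else 0
  | n + 1 => fun i j => ∑' k : ℕ, matPow q n i k * q k j

/-- irreducibility of a non-negative matrix indexed by `ℕ`. -/
def MatIrred (q : ℕ → ℕ → ℝ) : Prop := ∀ i j, ∃ n, 1 ≤ n ∧ 0 < matPow q n i j

/-- irreducibility of the finite sub-matrix `(q(i,j))_{i,j < N}`. -/
def FinIrred (q : ℕ → ℕ → ℝ) (N : ℕ) : Prop :=
  ∀ i j, i < N → j < N → ∃ m, 1 ≤ m ∧ ∃ c : ℕ → ℕ,
    c 0 = i ∧ c m = j ∧ (∀ t ≤ m, c t < N) ∧ ∀ t < m, 0 < q (c t) (c (t + 1))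


section Aux

lemma str_nonneg (C : Env) {i : ℕ} (hi : 1 ≤ i) : 0 ≤ C.str i := by
  unfold Env.str; split
  · exact (C.hp i hi (by assumption)).1
  · exact C.hq0.le

lemma str_lt_one (C : Env) {i : ℕ} (hi : 1 ≤ i) : C.str i < 1 := by
  unfold Env.str; split
  · exact (C.hp i hi (by assumption)).2
  · exact C.hq1

lemma xiProb_nonneg (b : ℕ) (C : Env) {i : ℕ} (hi : 1 ≤ i) (v : ℕ) :
    0 ≤ xiProb b C i v := by
  have h1 := str_lt_one C hi
  unfold xiProb
  split
  · linarith
  · split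
    · exact div_nonneg (str_nonneg C hi) (Nat.cast_nonneg b)
    · exact le_refl 0

lemma xiProb_le_one (b : ℕ) (hb : 1 ≤ b) (C : Env) {i : ℕ} (hi : 1 ≤ i) (v : ℕ) :
    xiProb b C i v ≤ 1 := by
  have h0 := str_nonneg C hi
  have h1 := str_lt_one C hi
  have hb' : (1:ℝ) ≤ b := by exact_mod_cast hb
  unfold xiProb
  split
  · linarith
  · split
    · rw [div_le_one (by linarith)]; linarith
    · norm_num

lemma seqWeight_nonneg (b : ℕ) (C : Env) {N : ℕ} (e : Fin N → Fin (b+1)) :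
    0 ≤ seqWeight b C e :=
  Finset.prod_nonneg fun k _ => xiProb_nonneg b C (Nat.le_add_left 1 k.1) _

lemma exists_rho (C : Env) : ∃ ρ : ℝ, 0 < ρ ∧ ρ < 1 ∧ ∀ i, 1 ≤ i → C.str i ≤ ρ := by
  classical
  set S : Finset ℝ := insert C.q ((Finset.Icc 1 C.M).image C.p) with hS
  have hne : S.Nonempty := ⟨C.q, Finset.mem_insert_self _ _⟩
  refine ⟨S.max' hne, ?_, ?_, ?_⟩
  · exact lt_of_lt_of_le C.hq0 (Finset.le_max' S _ (Finset.mem_insert_self _ _))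
  · rcases Finset.mem_insert.1 (S.max'_mem hne) with h | h
    · rw [h]; exact C.hq1
    · obtain ⟨i, hi, hpi⟩ := Finset.mem_image.1 h
      rw [Finset.mem_Icc] at hi
      rw [← hpi]; exact (C.hp i hi.1 hi.2).2
  · intro i hi
    unfold Env.str; split
    · exact Finset.le_max' S _ (Finset.mem_insert_of_mem
        (Finset.mem_image_of_mem _ (Finset.mem_Icc.2 ⟨hi, by assumption⟩)))
    · exact Finset.le_max' S _ (Finset.mem_insert_self _ _)

/-- the `N`-th term of the series defining `pMat i j` for `i ≠ 0`. -/
noncomputable def rowTerm (b : ℕ) (C : Env) (i j N : ℕ) : ℝ :=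
  ∑ e ∈ Finset.univ.filter (fun e : Fin N → Fin (b + 1) =>
      (Finset.univ.filter fun k => (e k).1 = 0).card = i ∧
      (Finset.univ.filter fun k => (e k).1 = 1).card = j ∧
      ∀ k : Fin N, k.1 + 1 = N → (e k).1 = 0),
    seqWeight b C e

lemma pMat_eq (b : ℕ) (C : Env) (i j : ℕ) (hi : i ≠ 0) :
    pMat b C i j = ∑' N, rowTerm b C i j N := by
  simp only [pMat, if_neg hi]; rfl

lemma rowTerm_nonneg (b : ℕ) (C : Env) (i j N : ℕ) : 0 ≤ rowTerm b C i j N :=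
  Finset.sum_nonneg fun e _ => seqWeight_nonneg b C e

lemma card_low (b : ℕ) (hb : 2 ≤ b) :
    (Finset.univ.filter (fun v : Fin (b+1) => v.1 ≤ 1)).card = 2 := by
  have h : (Finset.univ.filter (fun v : Fin (b+1) => v.1 ≤ 1))
      = {(⟨0, by omega⟩ : Fin (b+1)), ⟨1, by omega⟩} := by
    ext v
    simp only [Finset.mem_filter, Finset.mem_univ, true_and, Finset.mem_insert,
      Finset.mem_singleton, Fin.ext_iff]
    omega
  rw [h, Finset.card_insert_of_notMem (by simp [Fin.ext_iff]), Finset.card_singleton]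

lemma card_high (b : ℕ) (hb : 2 ≤ b) :
    (Finset.univ.filter (fun v : Fin (b+1) => ¬ v.1 ≤ 1)).card = b - 1 := by
  have h := Finset.card_filter_add_card_filter_not
    (s := (Finset.univ : Finset (Fin (b+1)))) (fun v : Fin (b+1) => v.1 ≤ 1)
  rw [card_low b hb, Finset.card_univ, Fintype.card_fin] at h
  omega

lemma card_low_filter {b N i j : ℕ} {e : Fin N → Fin (b+1)}
    (h0 : (Finset.univ.filter fun k => (e k).1 = 0).card = i)
    (h1 : (Finset.univ.filter fun k => (e k).1 = 1).card = j) :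
    (Finset.univ.filter (fun k => (e k).1 ≤ 1)).card = i + j := by
  classical
  have hun : (Finset.univ.filter (fun k : Fin N => (e k).1 ≤ 1)) =
      (Finset.univ.filter fun k => (e k).1 = 0) ∪ (Finset.univ.filter fun k => (e k).1 = 1) := by
    rw [← Finset.filter_or]
    apply Finset.filter_congr
    intro k _
    omega
  rw [hun, Finset.card_union_of_disjoint, h0, h1]
  rw [Finset.disjoint_left]
  intro k hk1 hk2
  rw [Finset.mem_filter] at hk1 hk2
  omega

lemma card_not_low {b N i j : ℕ} {e : Fin N → Fin (b+1)}
    (h0 : (Finset.univ.filter fun k => (e k).1 = 0).card = i)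
    (h1 : (Finset.univ.filter fun k => (e k).1 = 1).card = j) :
    (Finset.univ.filter (fun k => ¬ (e k).1 ≤ 1)).card = N - (i+j) ∧ i + j ≤ N := by
  classical
  have hsplit := Finset.card_filter_add_card_filter_not
    (s := (Finset.univ : Finset (Fin N))) (fun k => (e k).1 ≤ 1)
  rw [card_low_filter h0 h1, Finset.card_univ, Fintype.card_fin] at hsplit
  omega

lemma seqWeight_le (b : ℕ) (hb : 2 ≤ b) (C : Env) {ρ : ℝ} (hρ0 : 0 < ρ) (hρ1 : ρ < 1)
    (hρ : ∀ i, 1 ≤ i → C.str i ≤ ρ) {N : ℕ} (e : Fin N → Fin (b+1)) :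
    seqWeight b C e ≤ (ρ / b) ^ (Finset.univ.filter (fun k => ¬ (e k).1 ≤ 1)).card := by
  classical
  have hb0 : (0:ℝ) < b := by positivity
  calc seqWeight b C e ≤ ∏ k : Fin N, (if (e k).1 ≤ 1 then 1 else ρ / b) := by
        apply Finset.prod_le_prod
        · intro k _; exact xiProb_nonneg b C (Nat.le_add_left 1 k.1) _
        · intro k _
          by_cases hk : (e k).1 ≤ 1
          · rw [if_pos hk]
            exact xiProb_le_one b (by omega) C (Nat.le_add_left 1 k.1) _
          · rw [if_neg hk]
            unfold xiProb
            rw [if_neg (by omega), if_pos (by omega : (e k).1 ≤ b)]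
            gcongr
            exact hρ _ (Nat.le_add_left 1 k.1)
    _ = (ρ / b) ^ (Finset.univ.filter (fun k => ¬ (e k).1 ≤ 1)).card := by
        rw [Finset.prod_ite (fun _ => (1:ℝ)) (fun _ => ρ / b), Finset.prod_const,
          Finset.prod_const, one_pow, one_mul]

end Aux

section Aux2

lemma rowTerm_le (b : ℕ) (hb : 2 ≤ b) (C : Env) {ρ : ℝ} (hρ0 : 0 < ρ) (hρ1 : ρ < 1)
    (hρ : ∀ i, 1 ≤ i → C.str i ≤ ρ) (i j N : ℕ) :
    rowTerm b C i j N ≤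
      (N.choose (i+j) : ℝ) * 2^(i+j) * (((b:ℝ)-1) * ρ / b) ^ (N - (i+j)) := by
  classical
  have hb0 : (0:ℝ) < b := by positivity
  set s := i + j with hs
  set A := Finset.univ.filter (fun e : Fin N → Fin (b + 1) =>
      (Finset.univ.filter fun k => (e k).1 = 0).card = i ∧
      (Finset.univ.filter fun k => (e k).1 = 1).card = j ∧
      ∀ k : Fin N, k.1 + 1 = N → (e k).1 = 0) with hA
  have hstep1 : rowTerm b C i j N ≤ (A.card : ℝ) * (ρ / b) ^ (N - s) := by
    have := Finset.sum_le_card_nsmul A (fun e => seqWeight b C e) ((ρ / b) ^ (N - s)) ?_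
    · rw [nsmul_eq_mul] at this; exact this
    · intro e he
      rw [hA, Finset.mem_filter] at he
      obtain ⟨-, h0, h1, -⟩ := he
      have hc := card_not_low h0 h1
      calc seqWeight b C e
          ≤ (ρ / b) ^ (Finset.univ.filter (fun k => ¬ (e k).1 ≤ 1)).card :=
            seqWeight_le b hb C hρ0 hρ1 hρ e
        _ = (ρ / b) ^ (N - s) := by rw [hc.1]
  have hcard : A.card ≤ N.choose s * (2^s * (b-1)^(N-s)) := by
    set B : Finset (Fin N) → Finset (Fin N → Fin (b+1)) := fun T =>
      Fintype.piFinset (fun k => if k ∈ T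
        then Finset.univ.filter (fun v : Fin (b+1) => v.1 ≤ 1)
        else Finset.univ.filter (fun v : Fin (b+1) => ¬ v.1 ≤ 1)) with hB
    have hsub : A ⊆ (Finset.powersetCard s Finset.univ).biUnion B := by
      intro e he
      rw [hA, Finset.mem_filter] at he
      obtain ⟨-, h0, h1, -⟩ := he
      refine Finset.mem_biUnion.2 ⟨Finset.univ.filter (fun k => (e k).1 ≤ 1), ?_, ?_⟩
      · rw [Finset.mem_powersetCard]
        exact ⟨Finset.filter_subset _ _, card_low_filter h0 h1⟩
      · rw [hB, Fintype.mem_piFinset]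
        intro k
        split_ifs with hkT
        · exact Finset.mem_filter.2 ⟨Finset.mem_univ _, (Finset.mem_filter.1 hkT).2⟩
        · exact Finset.mem_filter.2 ⟨Finset.mem_univ _,
            fun hc => hkT (Finset.mem_filter.2 ⟨Finset.mem_univ _, hc⟩)⟩
    have hBcard : ∀ T ∈ Finset.powersetCard s (Finset.univ : Finset (Fin N)),
        (B T).card = 2^s * (b-1)^(N-s) := by
      intro T hT
      rw [Finset.mem_powersetCard] at hT
      rw [hB, Fintype.card_piFinset]
      have : ∀ k : Fin N, ((if k ∈ T
          then Finset.univ.filter (fun v : Fin (b+1) => v.1 ≤ 1)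
          else Finset.univ.filter (fun v : Fin (b+1) => ¬ v.1 ≤ 1)).card)
          = (if k ∈ T then 2 else b - 1) := by
        intro k
        by_cases hk : k ∈ T
        · rw [if_pos hk, if_pos hk, card_low b hb]
        · rw [if_neg hk, if_neg hk, card_high b hb]
      rw [Finset.prod_congr rfl (fun k _ => this k)]
      rw [Finset.prod_ite (fun _ => 2) (fun _ => b - 1), Finset.prod_const, Finset.prod_const]
      have h1 : (Finset.univ.filter (fun k : Fin N => k ∈ T)) = T := by
        rw [Finset.filter_mem_eq_inter, Finset.univ_inter]
      have h2 : (Finset.univ.filter (fun k : Fin N => ¬ k ∈ T)).card = N - s := by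
        have := Finset.card_filter_add_card_filter_not
          (s := (Finset.univ : Finset (Fin N))) (fun k : Fin N => k ∈ T)
        rw [h1, hT.2, Finset.card_univ, Fintype.card_fin] at this
        omega
      rw [h1, hT.2, h2]
    calc A.card ≤ ((Finset.powersetCard s (Finset.univ : Finset (Fin N))).biUnion B).card :=
          Finset.card_le_card hsub
      _ ≤ ∑ T ∈ Finset.powersetCard s (Finset.univ : Finset (Fin N)), (B T).card :=
          Finset.card_biUnion_le
      _ = ∑ T ∈ Finset.powersetCard s (Finset.univ : Finset (Fin N)), 2^s * (b-1)^(N-s) :=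
          Finset.sum_congr rfl hBcard
      _ = N.choose s * (2^s * (b-1)^(N-s)) := by
          rw [Finset.sum_const, Finset.card_powersetCard, Finset.card_univ, Fintype.card_fin,
            smul_eq_mul]
  have hpow : (0:ℝ) ≤ (ρ / b) ^ (N - s) := by positivity
  calc rowTerm b C i j N ≤ (A.card : ℝ) * (ρ / b) ^ (N - s) := hstep1
    _ ≤ ((N.choose s * (2^s * (b-1)^(N-s)) : ℕ) : ℝ) * (ρ / b) ^ (N - s) := by
        apply mul_le_mul_of_nonneg_right _ hpow
        exact_mod_cast hcard
    _ = (N.choose s : ℝ) * 2^s * (((b:ℝ)-1) * ρ / b) ^ (N - s) := by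
        push_cast [Nat.cast_sub (by omega : 1 ≤ b)]
        rw [show ((b:ℝ)-1) * ρ / (b:ℝ) = ((b:ℝ)-1) * (ρ/(b:ℝ)) by ring, mul_pow]
        ring

lemma summable_rowTerm (b : ℕ) (hb : 2 ≤ b) (C : Env) (i j : ℕ) :
    Summable (fun N => rowTerm b C i j N) := by
  obtain ⟨ρ, hρ0, hρ1, hρ⟩ := exists_rho C
  have hb0 : (0:ℝ) < b := by positivity
  have hb1 : (2:ℝ) ≤ b := by exact_mod_cast hb
  set r : ℝ := ((b:ℝ)-1) * ρ / b with hr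
  have hr0 : 0 < r := by
    apply div_pos _ hb0
    apply mul_pos _ hρ0
    linarith
  have hr1 : r < 1 := by
    rw [hr, div_lt_one hb0]
    nlinarith
  set s := i + j with hs
  have hsum : Summable (fun N : ℕ => (2^s / r^s) * ((N:ℝ)^s * r^N)) :=
    (summable_pow_mul_geometric_of_norm_lt_one (R := ℝ) s
      (by rwa [Real.norm_eq_abs, abs_of_pos hr0])).mul_left _
  apply Summable.of_nonneg_of_le (fun N => rowTerm_nonneg b C i j N) _ hsum
  intro N
  have hle := rowTerm_le b hb C hρ0 hρ1 hρ i j N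
  rw [← hs, ← hr] at hle
  refine le_trans hle ?_
  by_cases hNs : s ≤ N
  · have hchoose : (N.choose s : ℝ) ≤ (N:ℝ)^s := by exact_mod_cast Nat.choose_le_pow N s
    have hkey : (2:ℝ)^s / r^s * ((N:ℝ)^s * r^N) = (N:ℝ)^s * 2^s * r^(N-s) := by
      rw [pow_sub₀ r (ne_of_gt hr0) hNs]
      field_simp
    rw [hkey]
    have h2 : (0:ℝ) ≤ 2^s := by positivity
    have h3 : (0:ℝ) ≤ r^(N-s) := by positivity
    apply mul_le_mul_of_nonneg_right _ h3
    exact mul_le_mul_of_nonneg_right hchoose h2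
  · rw [Nat.choose_eq_zero_of_lt (by omega)]
    push_cast
    rw [zero_mul, zero_mul]
    positivity

lemma pMat_pos_of_witness (b : ℕ) (hb : 2 ≤ b) (C : Env) {i j N : ℕ} (hi : 1 ≤ i)
    {e : Fin N → Fin (b+1)}
    (h0 : (Finset.univ.filter fun k => (e k).1 = 0).card = i)
    (h1 : (Finset.univ.filter fun k => (e k).1 = 1).card = j)
    (hl : ∀ k : Fin N, k.1 + 1 = N → (e k).1 = 0)
    (hpos : 0 < seqWeight b C e) : 0 < pMat b C i j := by
  classical
  rw [pMat_eq b C i j (by omega)]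
  have hmem : e ∈ Finset.univ.filter (fun e : Fin N → Fin (b + 1) =>
      (Finset.univ.filter fun k => (e k).1 = 0).card = i ∧
      (Finset.univ.filter fun k => (e k).1 = 1).card = j ∧
      ∀ k : Fin N, k.1 + 1 = N → (e k).1 = 0) :=
    Finset.mem_filter.2 ⟨Finset.mem_univ _, h0, h1, hl⟩
  have hrow : 0 < rowTerm b C i j N :=
    lt_of_lt_of_le hpos (Finset.single_le_sum (fun e _ => seqWeight_nonneg b C e) hmem)
  exact lt_of_lt_of_le hrow
    (Summable.le_tsum (summable_rowTerm b hb C i j) N (fun n _ => rowTerm_nonneg b C i j n))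

lemma pMat_pos_extract (b : ℕ) (C : Env) {i j : ℕ} (hi : i ≠ 0) (h : 0 < pMat b C i j) :
    ∃ (N : ℕ) (e : Fin N → Fin (b+1)),
      (Finset.univ.filter fun k => (e k).1 = 0).card = i ∧
      (Finset.univ.filter fun k => (e k).1 = 1).card = j ∧
      (∀ k : Fin N, k.1 + 1 = N → (e k).1 = 0) ∧
      ∀ k : Fin N, 0 < xiProb b C (k.1+1) (e k).1 := by
  classical
  rw [pMat_eq b C i j hi] at h
  have hex : ∃ N, rowTerm b C i j N ≠ 0 := by
    by_contra hc; push_neg at hc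
    have hz : (fun N => rowTerm b C i j N) = fun _ => 0 := funext hc
    rw [hz, tsum_zero] at h
    exact lt_irrefl 0 h
  obtain ⟨N, hN⟩ := hex
  obtain ⟨e, hmem, hne⟩ := Finset.exists_ne_zero_of_sum_ne_zero hN
  have hw : 0 < seqWeight b C e := lt_of_le_of_ne (seqWeight_nonneg b C e) (Ne.symm hne)
  rw [Finset.mem_filter] at hmem
  refine ⟨N, e, hmem.2.1, hmem.2.2.1, hmem.2.2.2, ?_⟩
  intro k
  rcases lt_or_eq_of_le (xiProb_nonneg b C (Nat.le_add_left 1 k.1) (e k).1) with hlt | heq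
  · exact hlt
  · exfalso
    have hz : seqWeight b C e = 0 :=
      Finset.prod_eq_zero (Finset.mem_univ k) heq.symm
    rw [hz] at hw
    exact lt_irrefl 0 hw

end Aux2

section Aux3

lemma pMat_mono (b : ℕ) (hb : 2 ≤ b) (C : Env) {x y x' y' : ℕ}
    (hx : 1 ≤ x) (hxx : x ≤ x') (hyy : y' ≤ y) (h : 0 < pMat b C x y) :
    0 < pMat b C x' y' := by
  classical
  obtain ⟨N, e, h0, h1, hl, hf⟩ := pMat_pos_extract b C (by omega) h
  obtain ⟨S, hS, hScard⟩ :=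
    Finset.exists_subset_card_eq (s := Finset.univ.filter (fun k : Fin N => (e k).1 = 1))
      (n := y - y') (by rw [h1]; omega)
  set d := x' - x with hd
  set two : Fin (b+1) := ⟨2, by omega⟩ with htwo
  have htwo2 : two.1 = 2 := rfl
  set f : Fin N → Fin (b+1) := fun k => if k ∈ S then two else e k with hfdef
  set e' : Fin (N + d) → Fin (b+1) := fun k =>
    (if hk : k.1 < N then f ⟨k.1, hk⟩ else (⟨0, by omega⟩ : Fin (b+1))) with he'
  have hSone : ∀ k ∈ S, (e k).1 = 1 := by
    intro k hk
    exact (Finset.mem_filter.1 (hS hk)).2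
  -- counts for f
  have hq0 : ∀ k, (f k).1 = 0 ↔ (e k).1 = 0 := by
    intro k
    by_cases hk : k ∈ S
    · simp only [hfdef, if_pos hk]
      have h1k := hSone k hk
      omega
    · simp only [hfdef, if_neg hk]
  have hf0 : (Finset.univ.filter fun k => (f k).1 = 0).card = x := by
    rw [← h0]
    exact congrArg Finset.card (Finset.filter_congr (fun k _ => hq0 k))
  have hq1 : ∀ k, (f k).1 = 1 ↔ ((e k).1 = 1 ∧ k ∉ S) := by
    intro k
    by_cases hk : k ∈ S
    · simp only [hfdef, if_pos hk]
      have h1k := hSone k hk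
      constructor
      · intro hh; omega
      · intro hh; exact absurd hk hh.2
    · simp only [hfdef, if_neg hk]
      tauto
  have hf1 : (Finset.univ.filter fun k => (f k).1 = 1).card = y' := by
    have hset : (Finset.univ.filter fun k => (f k).1 = 1)
        = (Finset.univ.filter fun k => (e k).1 = 1) \ S := by
      ext k
      simp only [Finset.mem_sdiff, Finset.mem_filter, Finset.mem_univ, true_and]
      exact hq1 k
    rw [hset, Finset.card_sdiff_of_subset hS, h1, hScard]
    omega
  -- evaluation lemmas for e'
  have hcast : ∀ k : Fin N, e' (Fin.castAdd d k) = f k := by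
    intro k
    simp only [he', Fin.coe_castAdd]
    rw [dif_pos k.isLt, Fin.eta]
  have hnat : ∀ k : Fin d, (e' (Fin.natAdd N k)).1 = 0 := by
    intro k
    simp only [he', Fin.coe_natAdd]
    rw [dif_neg (by omega)]
  -- counts for e'
  have he'0 : (Finset.univ.filter fun k => (e' k).1 = 0).card = x' := by
    rw [Finset.card_filter, Fin.sum_univ_add]
    have t1 : ∀ k : Fin N, (if (e' (Fin.castAdd d k)).1 = 0 then 1 else 0)
        = (if (f k).1 = 0 then 1 else 0) := by
      intro k; rw [hcast k]
    have t2 : ∀ k : Fin d, (if (e' (Fin.natAdd N k)).1 = 0 then 1 else 0) = 1 := by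
      intro k; rw [if_pos (hnat k)]
    rw [Finset.sum_congr rfl (fun k _ => t1 k), Finset.sum_congr rfl (fun k _ => t2 k),
      ← Finset.card_filter, hf0, Finset.sum_const, Finset.card_univ, Fintype.card_fin,
      smul_eq_mul, mul_one]
    omega
  have he'1 : (Finset.univ.filter fun k => (e' k).1 = 1).card = y' := by
    rw [Finset.card_filter, Fin.sum_univ_add]
    have t1 : ∀ k : Fin N, (if (e' (Fin.castAdd d k)).1 = 1 then 1 else 0)
        = (if (f k).1 = 1 then 1 else 0) := by
      intro k; rw [hcast k]
    have t2 : ∀ k : Fin d, (if (e' (Fin.natAdd N k)).1 = 1 then 1 else 0) = 0 := by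
      intro k; rw [if_neg (by rw [hnat k]; omega)]
    rw [Finset.sum_congr rfl (fun k _ => t1 k), Finset.sum_congr rfl (fun k _ => t2 k),
      ← Finset.card_filter, hf1, Finset.sum_const, smul_zero, add_zero]
  -- last entry is 0
  have hlast : ∀ k : Fin (N + d), k.1 + 1 = N + d → (e' k).1 = 0 := by
    intro k hk
    by_cases hkN : k.1 < N
    · have hev : e' k = f ⟨k.1, hkN⟩ := by
        simp only [he']
        rw [dif_pos hkN]
      have hkN1 : k.1 + 1 = N := by omega
      have he0 : (e ⟨k.1, hkN⟩).1 = 0 := hl ⟨k.1, hkN⟩ hkN1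
      rw [hev]
      by_cases hkS : (⟨k.1, hkN⟩ : Fin N) ∈ S
      · have h1k := hSone _ hkS
        omega
      · simp only [hfdef, if_neg hkS]
        exact he0
    · simp only [he']
      rw [dif_neg hkN]
  -- positivity of the weight
  have hwpos : 0 < seqWeight b C e' := by
    unfold seqWeight
    apply Finset.prod_pos
    intro k _
    by_cases hkN : k.1 < N
    · have hev : e' k = f ⟨k.1, hkN⟩ := by
        simp only [he']
        rw [dif_pos hkN]
      rw [hev]
      by_cases hkS : (⟨k.1, hkN⟩ : Fin N) ∈ S
      · have hone := hSone _ hkS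
        have hfk := hf ⟨k.1, hkN⟩
        rw [hone] at hfk
        simp only [hfdef, if_pos hkS]
        show 0 < xiProb b C (k.1 + 1) 2
        unfold xiProb at hfk ⊢
        rw [if_neg (by omega), if_pos (by omega)] at hfk
        rw [if_neg (by omega), if_pos (by omega)]
        exact hfk
      · simp only [hfdef, if_neg hkS]
        exact hf ⟨k.1, hkN⟩
    · have hev : (e' k).1 = 0 := by
        simp only [he']
        rw [dif_neg hkN]
      rw [hev]
      unfold xiProb
      rw [if_pos rfl]
      have := str_lt_one C (i := k.1 + 1) (Nat.le_add_left 1 k.1)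
      linarith
  exact pMat_pos_of_witness b hb C (by omega) he'0 he'1 hlast hwpos

lemma pMat_nonneg (b : ℕ) (C : Env) (i j : ℕ) : 0 ≤ pMat b C i j := by
  rcases Nat.eq_zero_or_pos i with h0 | h1
  · subst h0
    have he : pMat b C 0 j = if j = 0 then 1 else 0 := if_pos rfl
    rw [he]
    split <;> norm_num
  · rw [pMat_eq b C i j (by omega)]
    exact tsum_nonneg (fun N => rowTerm_nonneg b C i j N)

lemma pMat_zero_pos (b : ℕ) (C : Env) {j : ℕ} (h : 0 < pMat b C 0 j) : j = 0 := by
  by_contra hj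
  simp only [pMat, if_pos rfl, if_neg hj] at h
  exact lt_irrefl 0 h

lemma pPow_nonneg (b : ℕ) (C : Env) : ∀ n i j, 0 ≤ pPow b C n i j := by
  intro n
  induction n with
  | zero =>
    intro i j
    simp only [pPow]
    split <;> norm_num
  | succ n ih =>
    intro i j
    simp only [pPow]
    exact tsum_nonneg (fun k => mul_nonneg (ih i k) (pMat_nonneg b C k j))

lemma exists_path (b : ℕ) (C : Env) : ∀ n, 1 ≤ n → ∀ i j, 0 < pPow b C n i j →
    ∃ m, 1 ≤ m ∧ ∃ c : ℕ → ℕ, c 0 = i ∧ c m = j ∧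
      ∀ t < m, 0 < pMat b C (c t) (c (t + 1)) := by
  intro n
  induction n with
  | zero => intro h; omega
  | succ n ih =>
    intro _ i j h
    simp only [pPow] at h
    have hex : ∃ k, pPow b C n i k * pMat b C k j ≠ 0 := by
      by_contra hc; push_neg at hc
      have hz : (fun k => pPow b C n i k * pMat b C k j) = fun _ => 0 := funext hc
      rw [hz, tsum_zero] at h
      exact lt_irrefl 0 h
    obtain ⟨k, hk⟩ := hex
    obtain ⟨hk1, hk2⟩ := mul_ne_zero_iff.1 hk
    have h1 : 0 < pPow b C n i k := lt_of_le_of_ne (pPow_nonneg b C n i k) (Ne.symm hk1)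
    have h2 : 0 < pMat b C k j := lt_of_le_of_ne (pMat_nonneg b C k j) (Ne.symm hk2)
    rcases Nat.eq_zero_or_pos n with hn | hn
    · subst hn
      have hik : i = k := by
        by_contra hik
        simp only [pPow, if_neg hik] at h1
        exact lt_irrefl 0 h1
      subst hik
      refine ⟨1, le_rfl, fun t => if t = 0 then i else j, ?_, ?_, ?_⟩
      · show (if (0:ℕ) = 0 then i else j) = i
        rw [if_pos rfl]
      · show (if (1:ℕ) = 0 then i else j) = j
        rw [if_neg one_ne_zero]
      · intro t ht
        have ht0 : t = 0 := by omega
        subst ht0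
        show 0 < pMat b C (if (0:ℕ) = 0 then i else j) (if (0+1:ℕ) = 0 then i else j)
        rw [if_pos rfl, if_neg (by omega)]
        exact h2
    · obtain ⟨m, hm, c, hc0, hcm, hstep⟩ := ih hn i k h1
      refine ⟨m + 1, by omega, fun t => if t ≤ m then c t else j, ?_, ?_, ?_⟩
      · show (if 0 ≤ m then c 0 else j) = i
        rw [if_pos (Nat.zero_le m)]; exact hc0
      · show (if m + 1 ≤ m then c (m + 1) else j) = j
        rw [if_neg (by omega)]
      · intro t ht
        show 0 < pMat b C (if t ≤ m then c t else j) (if t + 1 ≤ m then c (t + 1) else j)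
        by_cases htm : t + 1 ≤ m
        · rw [if_pos (by omega : t ≤ m), if_pos htm]
          exact hstep t (by omega)
        · have hte : t = m := by omega
          subst hte
          rw [if_pos le_rfl, if_neg (by omega), hcm]
          exact h2

end Aux3


/-- **Lemma 4.2**. If `a ≤ a'` and `a ↔ a'`, then the finite sub-matrix
`(p(i,j))_{a ≤ i,j ≤ a'}` is irreducible : any two indices of `[a,a']` are joined by
a path with positive transition weights staying inside `[a,a']`. -/
theorem submatrix_irreducible
    (b : ℕ) (hb : 2 ≤ b) (C : Env) (a a' : ℕ) (haa : a ≤ a')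
    (h : macc b C a a') :
    ∀ i j : ℕ, a ≤ i → i ≤ a' → a ≤ j → j ≤ a' →
      ∃ m, 1 ≤ m ∧ ∃ c : ℕ → ℕ,
        c 0 = i ∧ c m = j ∧ (∀ t ≤ m, a ≤ c t ∧ c t ≤ a') ∧
        ∀ t < m, 0 < pMat b C (c t) (c (t + 1)) := by
  intro i j hai hia' haj hja'
  rcases Nat.eq_zero_or_pos a' with ha' | ha'
  · -- a' = 0 : everything is 0
    have ha0 : a = 0 := by omega
    have hi0 : i = 0 := by omega
    have hj0 : j = 0 := by omega
    subst ha' ha0 hi0 hj0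
    refine ⟨1, le_rfl, fun _ => 0, rfl, rfl, fun t _ => ⟨le_rfl, le_rfl⟩, fun t _ => ?_⟩
    show (0:ℝ) < pMat b C 0 0
    simp only [pMat, if_pos rfl]
    norm_num
  · obtain ⟨⟨n, hn1, hn⟩, -⟩ := h
    obtain ⟨m, hm, c, hc0, hcm, hstep⟩ := exists_path b C n hn1 a a' hn
    -- once at 0, the path stays at 0
    have hzero : ∀ t u, t ≤ u → u ≤ m → c t = 0 → c u = 0 := by
      intro t u htu hum h0
      have key : ∀ s, t + s ≤ m → c (t + s) = 0 := by
        intro s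
        induction s with
        | zero => intro _; simpa using h0
        | succ s ihs =>
          intro hs
          have h00 := ihs (by omega)
          have hp := hstep (t + s) (by omega)
          rw [h00] at hp
          have := pMat_zero_pos b C hp
          rw [show t + (s + 1) = t + s + 1 by omega]
          exact this
      have := key (u - t) (by omega)
      rw [show t + (u - t) = u by omega] at this
      exact this
    have ha1 : 1 ≤ a := by
      by_contra ha0
      have hc00 : c 0 = 0 := by rw [hc0]; omega
      have := hzero 0 m (Nat.zero_le m) le_rfl hc00
      rw [hcm] at this
      omega
    have hct : ∀ t, t ≤ m → 1 ≤ c t := by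
      intro t ht
      by_contra hc1
      have := hzero t m ht le_rfl (by omega)
      rw [hcm] at this
      omega
    -- crossing search
    have hfind : ∀ u, u ≤ a' →
        (∃ t, t < m ∧ c t < u ∧ u ≤ c (t + 1)) ∨ (∀ t, t ≤ m → u ≤ c t) := by
      intro u hu
      by_cases hx : ∃ t, t < m ∧ c t < u ∧ u ≤ c (t + 1)
      · exact Or.inl hx
      · right
        push_neg at hx
        have hback : ∀ s, s ≤ m → u ≤ c (m - s) := by
          intro s
          induction s with
          | zero => intro _; simpa [hcm] using hu
          | succ s ihs =>
            intro hs
            have h2 := ihs (by omega)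
            by_contra hlt
            push_neg at hlt
            have h3 := hx (m - (s + 1)) (by omega) hlt
            rw [show m - (s + 1) + 1 = m - s by omega] at h3
            omega
        intro t ht
        have := hback (m - t) (by omega)
        rw [show m - (m - t) = t by omega] at this
        exact this
    -- diagonal positivity on [a, a']
    have hcross : ∀ u, a ≤ u → u ≤ a' → 0 < pMat b C u u := by
      intro u hau hua
      rcases hfind u hua with ⟨t, htm, hlt, hle⟩ | hall
      · exact pMat_mono b hb C (hct t (le_of_lt htm)) (by omega) hle (hstep t htm)
      · have hu_eq : u = a := by
          have := hall 0 (Nat.zero_le m)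
          rw [hc0] at this
          omega
        subst hu_eq
        have h1c : u ≤ c 1 := hall 1 (by omega)
        have hp0 := hstep 0 (by omega)
        rw [hc0] at hp0
        exact pMat_mono b hb C ha1 le_rfl h1c hp0
    -- climbing within the interval
    have hclimb : ∀ jj, a ≤ jj → jj ≤ a' → ∀ ii, a ≤ ii → ii ≤ a' →
        ∃ mm, 1 ≤ mm ∧ ∃ cc : ℕ → ℕ, cc 0 = ii ∧ cc mm = jj ∧
          (∀ t ≤ mm, a ≤ cc t ∧ cc t ≤ a') ∧
          ∀ t < mm, 0 < pMat b C (cc t) (cc (t + 1)) := by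
      intro jj
      induction jj using Nat.strong_induction_on with
      | _ jj ih =>
        intro hajj hjja ii haii hiia
        by_cases hji : jj ≤ ii
        · refine ⟨1, le_rfl, fun t => if t = 0 then ii else jj, ?_, ?_, ?_, ?_⟩
          · show (if (0:ℕ) = 0 then ii else jj) = ii
            rw [if_pos rfl]
          · show (if (1:ℕ) = 0 then ii else jj) = jj
            rw [if_neg one_ne_zero]
          · intro t _
            show a ≤ (if t = 0 then ii else jj) ∧ (if t = 0 then ii else jj) ≤ a'
            by_cases ht0 : t = 0
            · rw [if_pos ht0]; exact ⟨haii, hiia⟩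
            · rw [if_neg ht0]; exact ⟨hajj, hjja⟩
          · intro t ht
            have ht0 : t = 0 := by omega
            subst ht0
            show 0 < pMat b C (if (0:ℕ) = 0 then ii else jj) (if (0+1:ℕ) = 0 then ii else jj)
            rw [if_pos rfl, if_neg (by omega)]
            exact pMat_mono b hb C (by omega) hji le_rfl (hcross jj hajj hjja)
        · push_neg at hji
          have hxex : ∃ t, t < m ∧ c t < jj ∧ jj ≤ c (t + 1) := by
            rcases hfind jj hjja with hx | hall
            · exact hx
            · exfalso
              have := hall 0 (Nat.zero_le m)
              rw [hc0] at this
              omega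
          obtain ⟨t, htm, hlt, hle⟩ := hxex
          set x0 := max (c t) a with hx0
          have hx0j : x0 < jj := by
            rw [hx0]
            exact max_lt hlt (by omega)
          have hx0a : a ≤ x0 := le_max_right _ _
          have hx0a' : x0 ≤ a' := by omega
          have hpx0 : 0 < pMat b C x0 jj :=
            pMat_mono b hb C (hct t (le_of_lt htm)) (le_max_left _ _) hle (hstep t htm)
          obtain ⟨m1, hm1, cc, hcc0, hccm, hccb, hccs⟩ :=
            ih x0 hx0j hx0a hx0a' ii haii hiia
          refine ⟨m1 + 1, by omega, fun t' => if t' ≤ m1 then cc t' else jj, ?_, ?_, ?_, ?_⟩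
          · show (if 0 ≤ m1 then cc 0 else jj) = ii
            rw [if_pos (Nat.zero_le m1)]; exact hcc0
          · show (if m1 + 1 ≤ m1 then cc (m1 + 1) else jj) = jj
            rw [if_neg (by omega)]
          · intro t' _
            show a ≤ (if t' ≤ m1 then cc t' else jj) ∧ (if t' ≤ m1 then cc t' else jj) ≤ a'
            by_cases ht' : t' ≤ m1
            · rw [if_pos ht']; exact hccb t' ht'
            · rw [if_neg ht']; exact ⟨hajj, hjja⟩
          · intro t' ht'
            show 0 < pMat b C (if t' ≤ m1 then cc t' else jj)
              (if t' + 1 ≤ m1 then cc (t' + 1) else jj)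
            by_cases h1 : t' + 1 ≤ m1
            · rw [if_pos (by omega : t' ≤ m1), if_pos h1]
              exact hccs t' (by omega)
            · have hte : t' = m1 := by omega
              subst hte
              rw [if_pos le_rfl, if_neg (by omega), hccm]
              exact hpx0
    exact hclimb j haj hja' i hai hia'

end CookieRW
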